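/- Let G be a finite simple graph on n vertices with maximal degree Δ > 0. Then G is VD_{⌊n/(2Δ)⌋}. -/

import Mathlib

/-- The closed neighborhood `N•(v) = N(v) ∪ {v}` of a vertex, as a `Finset`. -/
def SimpleGraph.closedNbhdFinset {V : Type*} [Fintype V] [DecidableEq V] (G : SimpleGraph V)
    [DecidableRel G.Adj] (v : V) : Finset V :=
  insert v (G.neighborFinset v)

/-- `VD G s k` means that the induced subgraph of `G` on the vertex set `s` has the
graph property `VD_k`: every (induced sub)graph is `VD_0`; a graph with exactly `k`
vertices and no edges is `VD_k`; and if there is a vertex `v` such that deleting `v`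
yields a `VD_k` graph and deleting the closed neighborhood of `v` yields a `VD_{k-1}`
graph, then the graph is `VD_k`. -/
inductive SimpleGraph.VD {V : Type*} [Fintype V] [DecidableEq V] (G : SimpleGraph V)
    [DecidableRel G.Adj] : Finset V → ℕ → Prop
  | zero (s : Finset V) : SimpleGraph.VD G s 0
  | edgeless (s : Finset V) (k : ℕ) (hcard : s.card = k)
      (h : ∀ u ∈ s, ∀ w ∈ s, ¬ G.Adj u w) : SimpleGraph.VD G s k
  | step (s : Finset V) (k : ℕ) (v : V) (hv : v ∈ s)
      (hdel : SimpleGraph.VD G (s.erase v) (k + 1))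
      (hnbr : SimpleGraph.VD G (s \ G.closedNbhdFinset v) k) : SimpleGraph.VD G s (k + 1)

namespace VDProof

open Finset
set_option linter.unusedSectionVars false

variable {V : Type*} [Fintype V] [DecidableEq V] {G : SimpleGraph V} [DecidableRel G.Adj]

/-! ### Basic set identities -/

lemma mem_closedNbhd {v z : V} :
    z ∈ G.closedNbhdFinset v ↔ z = v ∨ G.Adj v z := by
  simp [SimpleGraph.closedNbhdFinset, SimpleGraph.mem_neighborFinset]

lemma sdiff_closed_of_edgeless {s : Finset V} (h : ∀ u ∈ s, ∀ w ∈ s, ¬ G.Adj u w)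
    {v : V} (hv : v ∈ s) : s \ G.closedNbhdFinset v = s.erase v := by
  ext z
  simp only [Finset.mem_sdiff, Finset.mem_erase, mem_closedNbhd]
  constructor
  · rintro ⟨hz, hn⟩
    exact ⟨fun e => hn (Or.inl e), hz⟩
  · rintro ⟨hne, hz⟩
    exact ⟨hz, fun h' => h'.elim hne (fun ha => h v hv z hz ha)⟩

lemma erase_union_right {j t : Finset V} (v : V) (hvt : v ∉ t) :
    (j ∪ t).erase v = j.erase v ∪ t := by
  ext z
  simp only [Finset.mem_erase, Finset.mem_union]
  constructor
  · rintro ⟨hne, hz | hz⟩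
    · exact Or.inl ⟨hne, hz⟩
    · exact Or.inr hz
  · rintro (⟨hne, hz⟩ | hz)
    · exact ⟨hne, Or.inl hz⟩
    · exact ⟨fun e => hvt (e ▸ hz), Or.inr hz⟩

lemma erase_union_left {j t : Finset V} (v : V) (hvj : v ∉ j) :
    (j ∪ t).erase v = j ∪ t.erase v := by
  rw [Finset.union_comm, erase_union_right v hvj, Finset.union_comm]

lemma disjoint_closedNbhd_of_cross {s t : Finset V} {v : V} (hv : v ∈ s)
    (hd : Disjoint s t) (hc : ∀ x ∈ s, ∀ y ∈ t, ¬ G.Adj x y) :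
    Disjoint t (G.closedNbhdFinset v) := by
  rw [Finset.disjoint_left]
  intro z hzt hzN
  rcases mem_closedNbhd.1 hzN with rfl | hadj
  · exact (Finset.disjoint_left.1 hd hv) hzt
  · exact hc v hv z hzt hadj

lemma sdiff_union_cross_right {j t : Finset V} {v : V} (hv : v ∈ j)
    (hd : Disjoint j t) (hc : ∀ x ∈ j, ∀ y ∈ t, ¬ G.Adj x y) :
    (j ∪ t) \ G.closedNbhdFinset v = (j \ G.closedNbhdFinset v) ∪ t := by
  rw [Finset.union_sdiff_distrib]
  congr 1
  exact Finset.sdiff_eq_self_iff_disjoint.2 (disjoint_closedNbhd_of_cross hv hd hc)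

/-! ### Basic VD lemmas -/

lemma vd_edgeless_le : ∀ n (s : Finset V), s.card ≤ n → ∀ k, k ≤ s.card →
    (∀ u ∈ s, ∀ w ∈ s, ¬ G.Adj u w) → G.VD s k := by
  intro n
  induction n with
  | zero =>
    intro s hs k hk h
    have : k = 0 := by omega
    subst this
    exact SimpleGraph.VD.zero s
  | succ n IH =>
    intro s hs k hk h
    rcases eq_or_lt_of_le hk with heq | hlt
    · exact SimpleGraph.VD.edgeless s k heq.symm h
    · have hne : s.Nonempty := Finset.card_pos.1 (by omega)
      obtain ⟨v, hv⟩ := hne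
      cases k with
      | zero => exact SimpleGraph.VD.zero s
      | succ m =>
        have hce : (s.erase v).card = s.card - 1 := Finset.card_erase_of_mem hv
        have hsub : s.erase v ⊆ s := Finset.erase_subset _ _
        have h' : ∀ u ∈ s.erase v, ∀ w ∈ s.erase v, ¬ G.Adj u w :=
          fun u hu w hw => h u (hsub hu) w (hsub hw)
        refine SimpleGraph.VD.step s m v hv ?_ ?_
        · exact IH (s.erase v) (by omega) (m + 1) (by omega) h'
        · rw [sdiff_closed_of_edgeless h hv]
          exact IH (s.erase v) (by omega) m (by omega) h'

lemma vd_one {s : Finset V} (h : s.Nonempty) : G.VD s 1 := by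
  have : ∀ n (s : Finset V), s.card ≤ n → s.Nonempty → G.VD s 1 := by
    intro n
    induction n with
    | zero => intro s hs hne; exact absurd (Finset.card_pos.2 hne) (by omega)
    | succ n IH =>
      intro s hs hne
      obtain ⟨v, hv⟩ := hne
      rcases eq_or_lt_of_le (show 1 ≤ s.card from Finset.card_pos.2 ⟨v, hv⟩) with heq | hlt
      · refine SimpleGraph.VD.edgeless s 1 heq.symm ?_
        intro u hu w hw
        have hcard : s.card ≤ 1 := by omega
        have := Finset.card_le_one.1 hcard u hu w hw
        subst this
        exact fun ha => G.irrefl ha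
      · have hce : (s.erase v).card = s.card - 1 := Finset.card_erase_of_mem hv
        refine SimpleGraph.VD.step s 0 v hv ?_ (SimpleGraph.VD.zero _)
        exact IH (s.erase v) (by omega) (Finset.card_pos.1 (by omega))
  exact this s.card s le_rfl h

lemma vd_mono {s : Finset V} {k : ℕ} (h : G.VD s (k + 1)) : G.VD s k := by
  have aux : ∀ {s n}, G.VD s n → ∀ k, n = k + 1 → G.VD s k := by
    intro s n h
    induction h with
    | zero s => intro k hk; omega
    | edgeless s m hcard hadj =>
      intro k hk
      exact vd_edgeless_le s.card s le_rfl k (by omega) hadj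
    | step s m v hv hdel hnbr ihdel ihnbr =>
      intro k hk
      have hkm : k = m := by omega
      subst hkm
      cases k with
      | zero => exact SimpleGraph.VD.zero s
      | succ j =>
        exact SimpleGraph.VD.step s j v hv (ihdel (j + 1) rfl) (ihnbr j rfl)
  exact aux h k rfl

lemma vd_mono_le {s : Finset V} {j k : ℕ} (hjk : j ≤ k) (h : G.VD s k) : G.VD s j := by
  obtain ⟨d, rfl⟩ := Nat.exists_eq_add_of_le hjk
  clear hjk
  revert h
  induction d with
  | zero => exact fun h => h
  | succ d IH => exact fun h => IH (vd_mono h)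

/-! ### Padding and addition -/

lemma vd_pad : ∀ n (j t : Finset V) k, j.card ≤ n → Disjoint j t →
    (∀ x ∈ j, ∀ y ∈ t, ¬ G.Adj x y) → G.VD t k → G.VD (j ∪ t) k := by
  intro n
  induction n with
  | zero =>
    intro j t k hcard hd hc ht
    have : j = ∅ := Finset.card_eq_zero.1 (by omega)
    subst this
    rwa [Finset.empty_union]
  | succ n IH =>
    intro j t k hcard hd hc ht
    rcases j.eq_empty_or_nonempty with rfl | ⟨v, hv⟩
    · rwa [Finset.empty_union]
    cases k with
    | zero => exact SimpleGraph.VD.zero _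
    | succ m =>
      have hvt : v ∉ t := Finset.disjoint_left.1 hd hv
      have hce : (j.erase v).card = j.card - 1 := Finset.card_erase_of_mem hv
      have hdsub : Disjoint (j.erase v) t :=
        Finset.disjoint_of_subset_left (Finset.erase_subset _ _) hd
      have hcsub : ∀ x ∈ j.erase v, ∀ y ∈ t, ¬ G.Adj x y :=
        fun x hx => hc x (Finset.erase_subset _ _ hx)
      refine SimpleGraph.VD.step _ m v (Finset.mem_union_left _ hv) ?_ ?_
      · rw [erase_union_right v hvt]
        exact IH (j.erase v) t (m + 1) (by omega) hdsub hcsub ht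
      · rw [sdiff_union_cross_right hv hd hc]
        have hsub2 : j \ G.closedNbhdFinset v ⊆ j.erase v := by
          intro x hx
          rw [Finset.mem_sdiff] at hx
          rw [Finset.mem_erase]
          exact ⟨fun e => hx.2 (mem_closedNbhd.2 (Or.inl e)), hx.1⟩
        refine IH _ t m ?_ (Finset.disjoint_of_subset_left (hsub2.trans (Finset.erase_subset _ _)) hd)
          (fun x hx => hc x ((hsub2.trans (Finset.erase_subset _ _)) hx)) (vd_mono ht)
        have := Finset.card_le_card hsub2
        omega

lemma vd_add_edgeless (s1 : Finset V) (h1 : ∀ u ∈ s1, ∀ w ∈ s1, ¬ G.Adj u w) :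
    ∀ {t b}, G.VD t b → Disjoint s1 t → (∀ x ∈ s1, ∀ y ∈ t, ¬ G.Adj x y) →
    G.VD (s1 ∪ t) (s1.card + b) := by
  intro t b h
  induction h with
  | zero t =>
    intro hd hc
    have h0 : G.VD s1 s1.card := SimpleGraph.VD.edgeless s1 _ rfl h1
    have hp := vd_pad t.card t s1 s1.card le_rfl hd.symm
      (fun y hy x hx ha => hc x hx y hy ha.symm) h0
    rwa [Finset.union_comm, Nat.add_zero]
  | edgeless t m hcard hadj =>
    intro hd hc
    refine SimpleGraph.VD.edgeless _ _ ?_ ?_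
    · rw [Finset.card_union_of_disjoint hd, hcard]
    · intro u hu w hw
      rcases Finset.mem_union.1 hu with hu1 | hu2 <;> rcases Finset.mem_union.1 hw with hw1 | hw2
      · exact h1 u hu1 w hw1
      · exact hc u hu1 w hw2
      · exact fun ha => hc w hw1 u hu2 ha.symm
      · exact hadj u hu2 w hw2
  | step t m v hv hdel hnbr ihdel ihnbr =>
    intro hd hc
    have hvs1 : v ∉ s1 := Finset.disjoint_right.1 hd hv
    have hdsub : Disjoint s1 (t.erase v) :=
      Finset.disjoint_of_subset_right (Finset.erase_subset _ _) hd
    have hcsub : ∀ x ∈ s1, ∀ y ∈ t.erase v, ¬ G.Adj x y :=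
      fun x hx y hy => hc x hx y (Finset.erase_subset _ _ hy)
    have hdsub2 : Disjoint s1 (t \ G.closedNbhdFinset v) :=
      Finset.disjoint_of_subset_right (Finset.sdiff_subset) hd
    have hcsub2 : ∀ x ∈ s1, ∀ y ∈ t \ G.closedNbhdFinset v, ¬ G.Adj x y :=
      fun x hx y hy => hc x hx y (Finset.sdiff_subset hy)
    rw [show s1.card + (m + 1) = (s1.card + m) + 1 by omega]
    refine SimpleGraph.VD.step _ (s1.card + m) v (Finset.mem_union_right _ hv) ?_ ?_
    · rw [erase_union_left v hvs1]
      have := ihdel hdsub hcsub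
      rwa [show s1.card + (m + 1) = (s1.card + m) + 1 by omega] at this
    · have hd' : Disjoint t s1 := hd.symm
      have heq : (s1 ∪ t) \ G.closedNbhdFinset v = s1 ∪ (t \ G.closedNbhdFinset v) := by
        rw [Finset.union_comm s1 t, sdiff_union_cross_right hv hd'
          (fun y hy x hx ha => hc x hx y hy ha.symm), Finset.union_comm]
      rw [heq]
      exact ihnbr hdsub2 hcsub2

lemma vd_add : ∀ {s a}, G.VD s a → ∀ {t b}, G.VD t b → Disjoint s t →
    (∀ x ∈ s, ∀ y ∈ t, ¬ G.Adj x y) → G.VD (s ∪ t) (a + b) := by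
  intro s a h
  induction h with
  | zero s =>
    intro t b ht hd hc
    rw [Nat.zero_add]
    exact vd_pad s.card s t b le_rfl hd hc ht
  | edgeless s m hcard hadj =>
    intro t b ht hd hc
    rw [← hcard]
    exact vd_add_edgeless s hadj ht hd hc
  | step s m v hv hdel hnbr ihdel ihnbr =>
    intro t b ht hd hc
    have hvt : v ∉ t := Finset.disjoint_left.1 hd hv
    have hdsub : Disjoint (s.erase v) t :=
      Finset.disjoint_of_subset_left (Finset.erase_subset _ _) hd
    have hcsub : ∀ x ∈ s.erase v, ∀ y ∈ t, ¬ G.Adj x y :=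
      fun x hx => hc x (Finset.erase_subset _ _ hx)
    have hdsub2 : Disjoint (s \ G.closedNbhdFinset v) t :=
      Finset.disjoint_of_subset_left (Finset.sdiff_subset) hd
    have hcsub2 : ∀ x ∈ s \ G.closedNbhdFinset v, ∀ y ∈ t, ¬ G.Adj x y :=
      fun x hx => hc x (Finset.sdiff_subset hx)
    rw [show m + 1 + b = (m + b) + 1 by omega]
    refine SimpleGraph.VD.step _ (m + b) v (Finset.mem_union_left _ hv) ?_ ?_
    · rw [erase_union_right v hvt]
      have := ihdel ht hdsub hcsub
      rwa [show m + 1 + b = (m + b) + 1 by omega] at this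
    · rw [sdiff_union_cross_right hv hd hc]
      exact ihnbr ht hdsub2 hcsub2

/-! ### Reachability within a finset, components -/

/-- Reachability from `x` to `y` by a walk whose support stays inside `s`. -/
def Rch (G : SimpleGraph V) (s : Finset V) (x y : V) : Prop :=
  ∃ p : G.Walk x y, ∀ z ∈ p.support, z ∈ s

/-- The connected component of `x` inside `s`. -/
noncomputable def comp (G : SimpleGraph V) [DecidableRel G.Adj] (s : Finset V) (x : V) :
    Finset V :=
  @Finset.filter _ (fun y => Rch G s x y) (Classical.decPred _) s

lemma mem_comp {s : Finset V} {x y : V} :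
    y ∈ comp G s x ↔ y ∈ s ∧ Rch G s x y :=
  @Finset.mem_filter _ _ (Classical.decPred _) _ _

lemma comp_subset {s : Finset V} {x : V} : comp G s x ⊆ s :=
  fun y hy => (mem_comp.1 hy).1

lemma rch_refl {s : Finset V} {x : V} (hx : x ∈ s) : Rch G s x x :=
  ⟨SimpleGraph.Walk.nil, by intro z hz; simp only [SimpleGraph.Walk.support_nil,
    List.mem_singleton] at hz; rwa [hz]⟩

lemma rch_start_mem {s : Finset V} {x y : V} (h : Rch G s x y) : x ∈ s := by
  obtain ⟨p, hp⟩ := h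
  exact hp x p.start_mem_support

lemma rch_end_mem {s : Finset V} {x y : V} (h : Rch G s x y) : y ∈ s := by
  obtain ⟨p, hp⟩ := h
  exact hp y p.end_mem_support

lemma rch_symm {s : Finset V} {x y : V} (h : Rch G s x y) : Rch G s y x := by
  obtain ⟨p, hp⟩ := h
  exact ⟨p.reverse, fun z hz => hp z (by
    rwa [SimpleGraph.Walk.support_reverse, List.mem_reverse] at hz)⟩

lemma rch_trans {s : Finset V} {x y z : V} (h1 : Rch G s x y) (h2 : Rch G s y z) :
    Rch G s x z := by
  obtain ⟨p, hp⟩ := h1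
  obtain ⟨q, hq⟩ := h2
  exact ⟨p.append q, fun w hw => by
    rcases (SimpleGraph.Walk.mem_support_append_iff p q).1 hw with h | h
    exacts [hp w h, hq w h]⟩

lemma rch_adj {s : Finset V} {x y z : V} (h : Rch G s x y) (ha : G.Adj y z)
    (hz : z ∈ s) : Rch G s x z := by
  refine rch_trans h ⟨SimpleGraph.Walk.cons ha SimpleGraph.Walk.nil, ?_⟩
  intro w hw
  simp only [SimpleGraph.Walk.support_cons, SimpleGraph.Walk.support_nil,
    List.mem_cons, List.mem_singleton] at hw
  rcases hw with rfl | rfl | h'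
  · exact rch_end_mem h
  · exact hz
  · exact absurd h' (by simp)

lemma mem_comp_self {s : Finset V} {x : V} (hx : x ∈ s) : x ∈ comp G s x :=
  mem_comp.2 ⟨hx, rch_refl hx⟩

lemma comp_closed_adj {s : Finset V} {x y z : V} (hy : y ∈ comp G s x)
    (ha : G.Adj y z) (hz : z ∈ s) : z ∈ comp G s x := by
  obtain ⟨hys, hr⟩ := mem_comp.1 hy
  exact mem_comp.2 ⟨hz, rch_adj hr ha hz⟩

lemma comp_eq_of_mem {s : Finset V} {x y : V} (hy : y ∈ comp G s x) :
    comp G s y = comp G s x := by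
  obtain ⟨hys, hr⟩ := mem_comp.1 hy
  ext z
  simp only [mem_comp]
  constructor
  · rintro ⟨hz, hrz⟩; exact ⟨hz, rch_trans hr hrz⟩
  · rintro ⟨hz, hrz⟩; exact ⟨hz, rch_trans (rch_symm hr) hrz⟩

lemma rch_of_mem_support {s : Finset V} {x y : V} (p : G.Walk x y)
    (hp : ∀ z ∈ p.support, z ∈ s) : ∀ z ∈ p.support, Rch G s x z := by
  intro z hz
  exact ⟨p.takeUntil z hz, fun w hw => hp w (p.support_takeUntil_subset hz hw)⟩

lemma rch_shrink {s : Finset V} {x y : V} (h : Rch G s x y) :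
    Rch G (comp G s x) x y := by
  obtain ⟨p, hp⟩ := h
  exact ⟨p, fun z hz => mem_comp.2 ⟨hp z hz, rch_of_mem_support p hp z hz⟩⟩

lemma comp_idem {s : Finset V} {x y : V} (hy : y ∈ comp G s x) :
    comp G (comp G s x) y = comp G s x := by
  obtain ⟨hys, hr⟩ := mem_comp.1 hy
  apply Finset.Subset.antisymm comp_subset
  intro z hz
  obtain ⟨hzs, hrz⟩ := mem_comp.1 hz
  refine mem_comp.2 ⟨hz, ?_⟩
  exact rch_trans (rch_symm (rch_shrink hr)) (rch_shrink hrz)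

lemma comp_sdiff_eq {s : Finset V} {x0 y : V} (hy : y ∈ s) (hyC : y ∉ comp G s x0) :
    comp G (s \ comp G s x0) y = comp G s y := by
  apply Finset.Subset.antisymm
  · intro z hz
    obtain ⟨hzs, p, hp⟩ := mem_comp.1 hz
    exact mem_comp.2 ⟨(Finset.mem_sdiff.1 hzs).1,
      ⟨p, fun w hw => (Finset.mem_sdiff.1 (hp w hw)).1⟩⟩
  · intro z hz
    obtain ⟨hzs, p, hp⟩ := mem_comp.1 hz
    have hsupp : ∀ w ∈ p.support, w ∈ s \ comp G s x0 := by
      intro w hw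
      refine Finset.mem_sdiff.2 ⟨hp w hw, ?_⟩
      intro hwC
      have h1 : Rch G s y w := rch_of_mem_support p hp w hw
      have h2 : y ∈ comp G s w := mem_comp.2 ⟨hy, rch_symm h1⟩
      rw [comp_eq_of_mem hwC] at h2
      exact hyC h2
    exact mem_comp.2 ⟨hsupp z p.end_mem_support, ⟨p, hsupp⟩⟩

/-! ### Degrees and the potential function -/

/-- Degree of `x` into the set `s`. -/
def dg (G : SimpleGraph V) [DecidableRel G.Adj] (s : Finset V) (x : V) : ℕ :=
  (G.neighborFinset x ∩ s).card

lemma dg_le_maxDegree {s : Finset V} (x : V) : dg G s x ≤ G.maxDegree :=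
  le_trans (Finset.card_le_card (Finset.inter_subset_left)) (G.degree_le_maxDegree x)

lemma dg_mono {s t : Finset V} (h : s ⊆ t) (x : V) : dg G s x ≤ dg G t x :=
  Finset.card_le_card (Finset.inter_subset_inter Finset.Subset.rfl h)

lemma dg_erase {s : Finset V} {u v : V} (ha : G.Adj u v) (hv : v ∈ s) :
    dg G (s.erase v) u = dg G s u - 1 := by
  have : G.neighborFinset u ∩ s.erase v = (G.neighborFinset u ∩ s).erase v := by
    ext z
    simp only [Finset.mem_inter, Finset.mem_erase]
    tauto
  rw [dg, this, Finset.card_erase_of_mem]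
  · rfl
  · exact Finset.mem_inter.2 ⟨(SimpleGraph.mem_neighborFinset G u v).2 ha, hv⟩

/-- Minimum degree within `s` (0 for the empty set). -/
noncomputable def mdeg (G : SimpleGraph V) [DecidableRel G.Adj] (s : Finset V) : ℕ :=
  if h : s.Nonempty then (s.image (dg G s)).min' (h.image _) else 0

lemma mdeg_le {s : Finset V} {x : V} (hx : x ∈ s) : mdeg G s ≤ dg G s x := by
  rw [mdeg, dif_pos ⟨x, hx⟩]
  exact Finset.min'_le _ _ (Finset.mem_image_of_mem _ hx)

lemma exists_mdeg {s : Finset V} (h : s.Nonempty) : ∃ u ∈ s, dg G s u = mdeg G s := by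
  rw [mdeg, dif_pos h]
  have := Finset.min'_mem (s.image (dg G s)) (h.image _)
  obtain ⟨u, hu, heq⟩ := Finset.mem_image.1 this
  exact ⟨u, hu, heq⟩

/-- Weight of a (connected) piece. -/
noncomputable def phi (G : SimpleGraph V) [DecidableRel G.Adj] (s : Finset V) : ℕ :=
  max (2 * G.maxDegree) (s.card + (G.maxDegree - mdeg G s))

/-- Total potential: sum of weights of connected components. -/
noncomputable def Phi (G : SimpleGraph V) [DecidableRel G.Adj] (s : Finset V) : ℕ :=
  ∑ C ∈ s.image (fun x => comp G s x), phi G C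

lemma phi_ge_card (s : Finset V) : s.card ≤ phi G s :=
  le_trans (Nat.le_add_right _ _) (le_max_right _ _)

lemma phi_ge_two_mul (s : Finset V) : 2 * G.maxDegree ≤ phi G s := le_max_left _ _

lemma Phi_empty : Phi G (∅ : Finset V) = 0 := by
  simp [Phi]

lemma Phi_split {s : Finset V} {x0 : V} (hx0 : x0 ∈ s) :
    Phi G s = phi G (comp G s x0) + Phi G (s \ comp G s x0) := by
  have himg : s.image (fun x => comp G s x)
      = insert (comp G s x0)
        ((s \ comp G s x0).image (fun x => comp G (s \ comp G s x0) x)) := by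
    ext C
    simp only [Finset.mem_image, Finset.mem_insert, Finset.mem_sdiff]
    constructor
    · rintro ⟨y, hy, rfl⟩
      by_cases hyC : y ∈ comp G s x0
      · exact Or.inl (comp_eq_of_mem hyC)
      · exact Or.inr ⟨y, ⟨hy, hyC⟩, comp_sdiff_eq hy hyC⟩
    · rintro (rfl | ⟨y, ⟨hy, hyC⟩, rfl⟩)
      · exact ⟨x0, hx0, rfl⟩
      · exact ⟨y, hy, (comp_sdiff_eq hy hyC).symm⟩
  have hnm : comp G s x0 ∉
      (s \ comp G s x0).image (fun x => comp G (s \ comp G s x0) x) := by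
    rw [Finset.mem_image]
    rintro ⟨y, hy, heq⟩
    obtain ⟨hys, hyC⟩ := Finset.mem_sdiff.1 hy
    have : y ∈ comp G (s \ comp G s x0) y := mem_comp_self hy
    rw [heq] at this
    exact hyC this
  rw [Phi, himg, Finset.sum_insert hnm]
  rfl

lemma Phi_ge_card : ∀ n (s : Finset V), s.card ≤ n → s.card ≤ Phi G s := by
  intro n
  induction n with
  | zero =>
    intro s hs
    omega
  | succ n IH =>
    intro s hs
    rcases s.eq_empty_or_nonempty with rfl | ⟨x0, hx0⟩
    · simp [Phi_empty]
    · have hsub : comp G s x0 ⊆ s := comp_subset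
      have hx0c : x0 ∈ comp G s x0 := mem_comp_self hx0
      have hcards : (s \ comp G s x0).card = s.card - (comp G s x0).card :=
        Finset.card_sdiff_of_subset hsub
      have hcardC : 1 ≤ (comp G s x0).card := Finset.card_pos.2 ⟨x0, hx0c⟩
      have hcardC' : (comp G s x0).card ≤ s.card := Finset.card_le_card hsub
      have h1 := IH (s \ comp G s x0) (by omega)
      have h2 := phi_ge_card (G := G) (comp G s x0)
      rw [Phi_split hx0]
      omega

lemma Phi_connected {s : Finset V} (hne : s.Nonempty)
    (hc : ∀ x ∈ s, comp G s x = s) : Phi G s = phi G s := by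
  have : s.image (fun x => comp G s x) = {s} := by
    rw [show (fun x => comp G s x) = fun x : V => comp G s x from rfl]
    rw [Finset.image_congr (g := fun _ => s) (fun x hx => hc x hx), Finset.image_const hne]
  rw [Phi, this, Finset.sum_singleton]

/-! ### Main lemma -/

lemma vd_main (hΔ : 0 < G.maxDegree) : ∀ n (s : Finset V) k, s.card ≤ n →
    2 * G.maxDegree * k + 1 ≤ Phi G s → G.VD s (k + 1) := by
  intro n
  induction n with
  | zero =>
    intro s k h1 h2
    have hs : s = ∅ := Finset.card_eq_zero.1 (by omega)
    subst hs
    rw [Phi_empty] at h2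
    omega
  | succ n IH =>
    intro s k hcard hPhi
    have hne : s.Nonempty := by
      rcases s.eq_empty_or_nonempty with rfl | h
      · rw [Phi_empty] at hPhi; omega
      · exact h
    cases k with
    | zero => exact vd_one hne
    | succ j =>
      have hmul1 : 2 * G.maxDegree * (j + 1) = 2 * G.maxDegree * j + 2 * G.maxDegree := by
        ring
      by_cases hc : ∀ x ∈ s, comp G s x = s
      · -- connected case
        have hPhi' : Phi G s = phi G s := Phi_connected hne hc
        rw [hPhi', phi] at hPhi
        have hX : 2 * G.maxDegree * (j + 1) + 1 ≤ s.card + (G.maxDegree - mdeg G s) := by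
          rcases le_max_iff.1 hPhi with h | h
          · omega
          · exact h
        obtain ⟨u, hu, hdu⟩ := exists_mdeg (G := G) hne
        have hδΔ : mdeg G s ≤ G.maxDegree := hdu ▸ dg_le_maxDegree u
        have hs2 : 2 ≤ s.card := by
          by_contra h
          have h1 : s.card = 1 := by
            have := Finset.card_pos.2 hne; omega
          omega
        have hδ1 : 1 ≤ mdeg G s := by
          rcases Nat.eq_zero_or_pos (mdeg G s) with h0 | h
          · exfalso
            obtain ⟨y, hy, hyne⟩ := Finset.exists_mem_ne (s := s) (by omega) u
            have hyc : y ∈ comp G s u := by rw [hc u hu]; exact hy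
            obtain ⟨-, p, hp⟩ := mem_comp.1 hyc
            cases p with
            | nil => exact hyne rfl
            | @cons _ w _ ha q =>
              have hw : w ∈ s := by
                apply hp
                rw [SimpleGraph.Walk.support_cons]
                exact List.mem_cons_of_mem _ q.start_mem_support
              have : 1 ≤ dg G s u := by
                apply Finset.card_pos.2
                exact ⟨w, Finset.mem_inter.2 ⟨(SimpleGraph.mem_neighborFinset G u w).2 ha, hw⟩⟩
              omega
          · exact h
        -- pick a neighbor v of u inside s
        have hdg_pos : 0 < dg G s u := by omega
        obtain ⟨v, hv'⟩ := Finset.card_pos.1 hdg_pos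
        obtain ⟨hvn, hvs⟩ := Finset.mem_inter.1 hv'
        have ha : G.Adj u v := (SimpleGraph.mem_neighborFinset G u v).1 hvn
        have hune : u ≠ v := G.ne_of_adj ha
        have hu' : u ∈ s.erase v := Finset.mem_erase.2 ⟨hune, hu⟩
        have hce : (s.erase v).card = s.card - 1 := Finset.card_erase_of_mem hvs
        -- hdel branch
        have hdel : G.VD (s.erase v) (j + 1 + 1) := by
          apply IH (s.erase v) (j + 1) (by omega)
          -- potential bound for s.erase v
          have hsplit := Phi_split (G := G) hu'
          have hCsub : comp G (s.erase v) u ⊆ s.erase v := comp_subset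
          have hrest :=
            Phi_ge_card (G := G) (s.erase v \ comp G (s.erase v) u).card _ le_rfl
          have hcards : (s.erase v \ comp G (s.erase v) u).card
              = (s.erase v).card - (comp G (s.erase v) u).card :=
            Finset.card_sdiff_of_subset hCsub
          have hCle : (comp G (s.erase v) u).card ≤ (s.erase v).card :=
            Finset.card_le_card hCsub
          have hphiC : (comp G (s.erase v) u).card
              + (G.maxDegree - mdeg G (comp G (s.erase v) u))
              ≤ phi G (comp G (s.erase v) u) := le_max_right _ _
          have hmd1 : mdeg G (comp G (s.erase v) u) ≤ dg G (comp G (s.erase v) u) u :=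
            mdeg_le (mem_comp_self hu')
          have hmd2 : dg G (comp G (s.erase v) u) u ≤ dg G (s.erase v) u :=
            dg_mono hCsub u
          have hmd3 : dg G (s.erase v) u = dg G s u - 1 := dg_erase ha hvs
          rw [hdu] at hmd3
          omega
        -- hnbr branch
        have hnbr : G.VD (s \ G.closedNbhdFinset v) (j + 1) := by
          apply IH (s \ G.closedNbhdFinset v) j
          · have hsub : s \ G.closedNbhdFinset v ⊆ s.erase v := by
              intro x hx
              obtain ⟨hxs, hxN⟩ := Finset.mem_sdiff.1 hx
              exact Finset.mem_erase.2 ⟨fun e => hxN (mem_closedNbhd.2 (Or.inl e)), hxs⟩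
            have := Finset.card_le_card hsub
            omega
          · have h1 : s.card ≤ (s \ G.closedNbhdFinset v).card + (G.closedNbhdFinset v).card :=
              Finset.card_le_card_sdiff_add_card
            have h2 : (G.closedNbhdFinset v).card ≤ G.maxDegree + 1 := by
              refine le_trans (Finset.card_insert_le _ _) ?_
              have : (G.neighborFinset v).card = G.degree v := rfl
              rw [this]
              exact Nat.add_le_add_right (G.degree_le_maxDegree v) 1
            have h3 := Phi_ge_card (G := G) (s \ G.closedNbhdFinset v).card _ le_rfl
            omega
        exact SimpleGraph.VD.step s (j + 1) v hvs hdel hnbr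
      · -- disconnected case
        push_neg at hc
        obtain ⟨x0, hx0, hCne⟩ := hc
        have hsub : comp G s x0 ⊆ s := comp_subset
        have hx0C : x0 ∈ comp G s x0 := mem_comp_self hx0
        have htne : (s \ comp G s x0).Nonempty := by
          rcases (s \ comp G s x0).eq_empty_or_nonempty with h | h
          · exact absurd (Finset.Subset.antisymm hsub
              (Finset.sdiff_eq_empty_iff_subset.1 h)) hCne
          · exact h
        have hcC0 : (comp G s x0).card < s.card :=
          Finset.card_lt_card (Finset.ssubset_iff_subset_ne.2 ⟨hsub, hCne⟩)
        have hcsd : (s \ comp G s x0).card = s.card - (comp G s x0).card :=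
          Finset.card_sdiff_of_subset hsub
        have hcC0pos : 0 < (comp G s x0).card := Finset.card_pos.2 ⟨x0, hx0C⟩
        have hsplit := Phi_split (G := G) hx0
        have hPhiC0 : Phi G (comp G s x0) = phi G (comp G s x0) :=
          Phi_connected ⟨x0, hx0C⟩ (fun y hy => comp_idem hy)
        have hP2D : 2 * G.maxDegree ≤ phi G (comp G s x0) := phi_ge_two_mul _
        -- ceiling of phi C0 / 2Δ
        obtain ⟨q, r, hqr, hr⟩ : ∃ q r, 2 * G.maxDegree * q + r = phi G (comp G s x0) - 1
            ∧ r < 2 * G.maxDegree :=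
          ⟨(phi G (comp G s x0) - 1) / (2 * G.maxDegree), (phi G (comp G s x0) - 1) % (2 * G.maxDegree),
            Nat.div_add_mod _ _, Nat.mod_lt _ (by omega)⟩
        have hVDC0 : G.VD (comp G s x0) (q + 1) := by
          apply IH (comp G s x0) q (by omega)
          rw [hPhiC0]
          omega
        -- cross edges are absent
        have hcross : ∀ x ∈ s \ comp G s x0, ∀ y ∈ comp G s x0, ¬ G.Adj x y := by
          intro x hx y hy hadj
          obtain ⟨hxs, hxC⟩ := Finset.mem_sdiff.1 hx
          exact hxC (comp_closed_adj hy hadj.symm hxs)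
        rcases le_or_gt (j + 2) (q + 1) with hge | hlt
        · -- C0 alone suffices
          have hC0' : G.VD (comp G s x0) (j + 2) := vd_mono_le hge hVDC0
          have := vd_pad (G := G) (s \ comp G s x0).card (s \ comp G s x0) (comp G s x0)
            (j + 2) le_rfl Finset.sdiff_disjoint hcross hC0'
          rwa [Finset.sdiff_union_of_subset hsub] at this
        · -- split k between C0 and the rest
          have hqj : q ≤ j := by omega
          obtain ⟨c, hc'⟩ : ∃ c, j = q + c := ⟨j - q, by omega⟩
          have hmul2 : 2 * G.maxDegree * (j + 1)
              = 2 * G.maxDegree * c + 2 * G.maxDegree * q + 2 * G.maxDegree := by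
            rw [hc']; ring
          have hVDt : G.VD (s \ comp G s x0) (c + 1) := by
            apply IH (s \ comp G s x0) c (by omega)
            omega
          have hadd := vd_add hVDC0 hVDt Finset.sdiff_disjoint.symm
            (fun y hy x hx hadj => hcross x hx y hy hadj.symm)
          rw [Finset.union_comm, Finset.sdiff_union_of_subset hsub] at hadd
          have : q + 1 + (c + 1) = j + 1 + 1 := by omega
          rwa [this] at hadd

end VDProof

/-- A graph on `n` vertices with maximal degree `Δ > 0` is `VD_{⌊n/(2Δ)⌋}`. -/
theorem vd_of_maxDegree {V : Type*} [Fintype V] [DecidableEq V] (G : SimpleGraph V)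
    [DecidableRel G.Adj] (hΔ : 0 < G.maxDegree) :
    G.VD Finset.univ (Fintype.card V / (2 * G.maxDegree)) := by
  rcases Nat.eq_zero_or_pos (Fintype.card V / (2 * G.maxDegree)) with h0 | hpos
  · rw [h0]
    exact SimpleGraph.VD.zero _
  · obtain ⟨k, hk⟩ : ∃ k, Fintype.card V / (2 * G.maxDegree) = k + 1 :=
      ⟨_, (Nat.succ_pred_eq_of_pos hpos).symm⟩
    rw [hk]
    apply VDProof.vd_main hΔ (Finset.univ : Finset V).card _ _ le_rfl
    have h1 : Fintype.card V / (2 * G.maxDegree) * (2 * G.maxDegree) ≤ Fintype.card V :=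
      Nat.div_mul_le_self _ _
    rw [hk] at h1
    have h2 : (k + 1) * (2 * G.maxDegree) = 2 * G.maxDegree * k + 2 * G.maxDegree := by
      ring
    have h3 := VDProof.Phi_ge_card (G := G) (Finset.univ : Finset V).card _ le_rfl
    rw [Finset.card_univ] at h3
    omega
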